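/- arXiv:2007.01541 — 2 statements merged into one kernel-verified Lean document; each statement's English description precedes it below -/
import Mathlib

section
/- Let A ∈ ℝ^{N×N} have a symmetric sparsity pattern and admit a Cholesky decomposition P A Pᵀ = L Lᵀ for a permutation P corresponding to an ordering π of the vertex set V = {1,…,N} of the adjacency graph G = (V, E), E = {{i,j} : a_{ij} ≠ 0}. Assuming no cancellation of nonzero entries occurs during elimination, for i > j the entry ℓ_{ij} is nonzero if and only if there exists a path i = v₁, v₂, …, v_{k+1} = j in G with π(v_t) < min{π(i), π(j)} for all 2 ≤ t ≤ k. -/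
open Matrix

inductive SymbolicFill {N : ℕ} (adj : Fin N → Fin N → Prop) (π : Equiv.Perm (Fin N)) :
    Fin N → Fin N → Prop
  | base {i j : Fin N} : adj i j → SymbolicFill adj π i j
  | fill {i j k : Fin N} : π k < π i → π k < π j →
      SymbolicFill adj π i k → SymbolicFill adj π k j → SymbolicFill adj π i j

private lemma sf_exists_max_mem {α β : Type*} [LinearOrder β] (f : α → β) :
    ∀ {l : List α}, l ≠ [] → ∃ k ∈ l, ∀ v ∈ l, f v ≤ f k := by
  intro l
  induction l with
  | nil => simp
  | cons a l ih =>
    intro _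
    rcases eq_or_ne l [] with rfl | hne
    · exact ⟨a, by simp⟩
    · obtain ⟨k, hk, hmax⟩ := ih hne
      by_cases h : f a ≤ f k
      · refine ⟨k, List.mem_cons_of_mem _ hk, ?_⟩
        intro v hv
        rcases List.mem_cons.1 hv with rfl | hv
        · exact h
        · exact hmax v hv
      · refine ⟨a, List.mem_cons_self, ?_⟩
        intro v hv
        rcases List.mem_cons.1 hv with rfl | hv
        · exact le_refl _
        · exact (hmax v hv).trans (le_of_not_ge h)

private lemma sf_split_first {α : Type*} {a : α} :
    ∀ {l : List α}, a ∈ l → ∃ s t, l = s ++ a :: t ∧ a ∉ s := by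
  intro l
  induction l with
  | nil => simp
  | cons b l ih =>
    intro h
    by_cases hab : a = b
    · exact ⟨[], l, by simp [hab], by simp⟩
    · have hm : a ∈ l := by
        rcases List.mem_cons.1 h with h | h
        · exact absurd h hab
        · exact h
      obtain ⟨s, t, rfl, hns⟩ := ih hm
      exact ⟨b :: s, t, by simp, by simp [hab, hns]⟩

private lemma sf_split_last {α : Type*} {a : α} {l : List α} (h : a ∈ l) :
    ∃ s t, l = s ++ a :: t ∧ a ∉ t := by
  have h' : a ∈ l.reverse := List.mem_reverse.2 h
  obtain ⟨s, t, he, hns⟩ := sf_split_first h'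
  refine ⟨t.reverse, s.reverse, ?_, by simpa using hns⟩
  have := congrArg List.reverse he
  simpa using this

private lemma sf_chain_to_fill {N : ℕ} (adj : Fin N → Fin N → Prop) (π : Equiv.Perm (Fin N)) :
    ∀ n (l : List (Fin N)) (i j : Fin N), l.length ≤ n →
      List.Chain adj i (l ++ [j]) → (∀ v ∈ l, π v < π i ∧ π v < π j) →
      SymbolicFill adj π i j := by
  intro n
  induction n with
  | zero =>
    intro l i j hl hc _
    have : l = [] := List.length_eq_zero_iff.1 (Nat.le_zero.1 hl)
    subst this
    exact .base (List.chain_cons.1 hc).1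
  | succ n ih =>
    intro l i j hl hc hb
    rcases eq_or_ne l [] with rfl | hne
    · exact .base (List.chain_cons.1 hc).1
    · obtain ⟨k, hkl, hmax⟩ := sf_exists_max_mem (fun v => π v) hne
      obtain ⟨s1, t1, he1, hns1⟩ := sf_split_first hkl
      obtain ⟨s2, t2, he2, hnt2⟩ := sf_split_last hkl
      have hc1 : List.Chain adj i (s1 ++ [k]) := by
        rw [he1] at hc
        have h' : List.Chain adj i (s1 ++ k :: (t1 ++ [j])) := by simpa using hc
        exact (List.isChain_cons_split.1 h').1
      have hc2 : List.Chain adj k (t2 ++ [j]) := by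
        rw [he2] at hc
        have h' : List.Chain adj i (s2 ++ k :: (t2 ++ [j])) := by simpa using hc
        exact (List.isChain_cons_split.1 h').2
      have hlen1 : s1.length ≤ n := by
        rw [he1, List.length_append, List.length_cons] at hl; omega
      have hlen2 : t2.length ≤ n := by
        rw [he2, List.length_append, List.length_cons] at hl; omega
      have hlt : ∀ v ∈ l, v ≠ k → π v < π k := by
        intro v hv hvk
        exact lt_of_le_of_ne (hmax v hv) (fun h => hvk (π.injective h))
      have f1 : SymbolicFill adj π i k := by
        refine ih s1 i k hlen1 hc1 ?_
        intro v hv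
        have hvl : v ∈ l := he1 ▸ (List.mem_append.2 (Or.inl hv))
        have hvk : v ≠ k := fun h => hns1 (h ▸ hv)
        exact ⟨(hb v hvl).1, hlt v hvl hvk⟩
      have f2 : SymbolicFill adj π k j := by
        refine ih t2 k j hlen2 hc2 ?_
        intro v hv
        have hvl : v ∈ l := he2 ▸ (List.mem_append.2 (Or.inr (List.mem_cons_of_mem _ hv)))
        have hvk : v ≠ k := fun h => hnt2 (h ▸ hv)
        exact ⟨hlt v hvl hvk, (hb v hvl).2⟩
      exact .fill (hb k hkl).1 (hb k hkl).2 f1 f2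

private lemma sf_fill_to_chain {N : ℕ} {adj : Fin N → Fin N → Prop} {π : Equiv.Perm (Fin N)}
    {i j : Fin N} (h : SymbolicFill adj π i j) :
    ∃ l : List (Fin N), List.Chain adj i (l ++ [j]) ∧
      ∀ v ∈ l, π v < π i ∧ π v < π j := by
  induction h with
  | base h => exact ⟨[], List.chain_cons.2 ⟨h, List.Chain.nil⟩, by simp⟩
  | @fill i' j' k hki hkj h1 h2 ih1 ih2 =>
    obtain ⟨l1, hc1, hb1⟩ := ih1
    obtain ⟨l2, hc2, hb2⟩ := ih2
    refine ⟨l1 ++ k :: l2, ?_, ?_⟩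
    · rw [List.append_assoc, List.cons_append]
      exact List.isChain_cons_split.2 ⟨hc1, hc2⟩
    · intro v hv
      rcases List.mem_append.1 hv with hv | hv
      · exact ⟨(hb1 v hv).1, (hb1 v hv).2.trans hkj⟩
      · rcases List.mem_cons.1 hv with rfl | hv
        · exact ⟨hki, hkj⟩
        · exact ⟨(hb2 v hv).1.trans hki, (hb2 v hv).2⟩

/-- Rose–Tarjan–Lueker: assuming no cancellation, in the Cholesky decomposition of
`P A Pᵀ` the entry `ℓ_{ij}` (for `π j < π i`) is nonzero iff there is a path
`i = v₁, v₂, …, v_{k+1} = j` in the adjacency graph of `A` whose interior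
vertices `v_t` satisfy `π v_t < min (π i) (π j)`. -/
theorem symbolicFill_iff_path
    {N : ℕ} (A : Matrix (Fin N) (Fin N) ℝ)
    (hsym : ∀ i j : Fin N, A i j ≠ 0 ↔ A j i ≠ 0)  -- symmetric sparsity pattern
    (π : Equiv.Perm (Fin N))
    (adj : Fin N → Fin N → Prop)
    (hadj : ∀ i j : Fin N, adj i j ↔ (A i j ≠ 0 ∧ i ≠ j))
    (i j : Fin N) (hij : π j < π i) :
    SymbolicFill adj π i j ↔
      ∃ l : List (Fin N), List.Chain adj i (l ++ [j]) ∧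
        ∀ v ∈ l, π v < π i ∧ π v < π j := by
  constructor
  · exact sf_fill_to_chain
  · rintro ⟨l, hc, hb⟩
    exact sf_chain_to_fill adj π l.length l i j le_rfl hc hb
end

section
/- For the block matrix M = [[A, 0, B], [0, C, D], [Bᵀ, Dᵀ, E]] arising from a nested dissection ordering, if M is symmetric positive definite then its Cholesky factor has the block lower triangular structure [[L_A, 0, 0], [0, L_C, 0], [X, Y, L_S]]; in particular, the zero blocks coupling the first two diagonal blocks are preserved (no fill-in occurs between V₁ and V₂). -/
open Matrix

/-- Index of a vertex in the nested dissection ordering `(V₁, V₂, S)`. -/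
def ndIdx {n₁ n₂ s : ℕ} : (Fin n₁ ⊕ Fin n₂) ⊕ Fin s → ℕ
  | Sum.inl (Sum.inl i) => (i : ℕ)
  | Sum.inl (Sum.inr i) => n₁ + (i : ℕ)
  | Sum.inr i => n₁ + n₂ + (i : ℕ)

/-- For the nested dissection block matrix `M = [[A,0,B],[0,C,D],[Bᵀ,Dᵀ,E]]`,
if `M` is symmetric positive definite and `L` is its Cholesky factor (lower
triangular with positive diagonal, `L Lᵀ = M`), then the block of `L` coupling
`V₂` and `V₁` vanishes: no fill-in occurs between `V₁` and `V₂`. -/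
theorem nested_dissection_no_fill_in
    {n₁ n₂ s : ℕ}
    (A : Matrix (Fin n₁) (Fin n₁) ℝ) (C : Matrix (Fin n₂) (Fin n₂) ℝ)
    (E : Matrix (Fin s) (Fin s) ℝ)
    (B : Matrix (Fin n₁) (Fin s) ℝ) (D : Matrix (Fin n₂) (Fin s) ℝ)
    (M L : Matrix ((Fin n₁ ⊕ Fin n₂) ⊕ Fin s) ((Fin n₁ ⊕ Fin n₂) ⊕ Fin s) ℝ)
    (hM : M = fromBlocks (fromBlocks A 0 0 C) (fromRows B D)
      (fromCols Bᵀ Dᵀ) E)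
    (hMpd : M.PosDef)
    (hLtri : ∀ p q, ndIdx p < ndIdx q → L p q = 0)  -- L lower triangular
    (hLdiag : ∀ p, 0 < L p p)                        -- positive diagonal
    (hChol : L * Lᵀ = M) :
    ∀ (i : Fin n₂) (j : Fin n₁), L (Sum.inl (Sum.inr i)) (Sum.inl (Sum.inl j)) = 0 := by
  intro i
  suffices H : ∀ m : ℕ, ∀ j : Fin n₁, (j : ℕ) < m →
      L (Sum.inl (Sum.inr i)) (Sum.inl (Sum.inl j)) = 0 by
    intro j; exact H (j + 1) j (Nat.lt_succ_self _)
  intro m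
  induction m with
  | zero => intro j h; omega
  | succ m ihm =>
  intro j hjm
  have ih : ∀ k₁ : Fin n₁, (k₁ : ℕ) < (j : ℕ) →
      L (Sum.inl (Sum.inr i)) (Sum.inl (Sum.inl k₁)) = 0 := fun k₁ h => ihm k₁ (by omega)
  set P := (Sum.inl (Sum.inr i) : (Fin n₁ ⊕ Fin n₂) ⊕ Fin s) with hP
  set Q := (Sum.inl (Sum.inl j) : (Fin n₁ ⊕ Fin n₂) ⊕ Fin s) with hQ
  have hM0 : M P Q = 0 := by
    simp [hM, hP, hQ]
  have hsum : ∑ k, L P k * L Q k = 0 := by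
    have h := congrFun (congrFun hChol P) Q
    rw [hM0] at h
    rw [← h, Matrix.mul_apply]
    simp [Matrix.transpose_apply]
  have hkill : ∀ k : (Fin n₁ ⊕ Fin n₂) ⊕ Fin s,
      (∀ k₁ : Fin n₁, k ≠ Sum.inl (Sum.inl k₁)) → L Q k = 0 := by
    intro k hk
    apply hLtri
    match k with
    | Sum.inl (Sum.inl k₁) => exact absurd rfl (hk k₁)
    | Sum.inl (Sum.inr k₂) => simp [hQ, ndIdx]; omega
    | Sum.inr k₃ => simp [hQ, ndIdx]; omega
  have hsum1 : ∑ k₁ : Fin n₁, L P (Sum.inl (Sum.inl k₁)) * L Q (Sum.inl (Sum.inl k₁)) = 0 := by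
    rw [← hsum, Fintype.sum_sum_type, Fintype.sum_sum_type]
    have h2 : ∀ k₂ : Fin n₂, L P (Sum.inl (Sum.inr k₂)) * L Q (Sum.inl (Sum.inr k₂)) = 0 := by
      intro k₂; rw [hkill _ (by simp), mul_zero]
    have h3 : ∀ k₃ : Fin s, L P (Sum.inr k₃) * L Q (Sum.inr k₃) = 0 := by
      intro k₃; rw [hkill _ (by simp), mul_zero]
    simp [h2, h3]
  have hsingle : L P Q * L Q Q = 0 := by
    rw [← hsum1, Finset.sum_eq_single j]
    · intro k₁ _ hne
      rcases lt_or_gt_of_ne (Fin.val_ne_of_ne hne) with hlt | hgt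
      · rw [ih k₁ hlt, zero_mul]
      · rw [hLtri Q _ (by simp [hQ, ndIdx]; omega), mul_zero]
    · intro h; exact absurd (Finset.mem_univ j) h
  rcases mul_eq_zero.mp hsingle with h | h
  · exact h
  · exact absurd h (ne_of_gt (hLdiag Q))
end
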